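/- For every n ≥ 1 one has Ẽ_n = − Σ_{k=1}^{n} (Ẽ_{n−k})_+ · L^k. (Lemma 2.1 of the paper.) -/

import Mathlib

/-- Lemma 2.1: `Ẽ_n = − Σ_{k=1}^{n} (Ẽ_{n−k})_+ · L^k` for `n ≥ 1`. -/
theorem stmt_0 {R : Type*} [Ring R]
    (Pm : R →+ R)
    (hidem : ∀ x, Pm (Pm x) = Pm x)
    (hone : Pm 1 = 0)
    (hmm : ∀ x y, Pm (Pm x * Pm y) = Pm x * Pm y)
    (hpp : ∀ x y, Pm ((x - Pm x) * (y - Pm y)) = 0)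
    (L : R) (Et : ℕ → R)
    (hEt0 : Et 0 = 1) (hEt1 : Et 1 = -L)
    (hEtrec : ∀ n, 1 ≤ n → Et (n + 1) = Pm (Et n) * L) :
    ∀ n, 1 ≤ n →
      Et n = -∑ k ∈ Finset.Icc 1 n, (Et (n - k) - Pm (Et (n - k))) * L ^ k := by
  intro n hn
  induction n, hn using Nat.le_induction with
  | base => simp [hEt1, hEt0, hone]
  | succ n hn ih =>
    have key : ∑ k ∈ Finset.Icc 1 (n+1), (Et (n+1-k) - Pm (Et (n+1-k))) * L ^ k
        = (Et n - Pm (Et n)) * L +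
          (∑ k ∈ Finset.Icc 1 n, (Et (n-k) - Pm (Et (n-k))) * L ^ k) * L := by
      rw [← Finset.Ico_add_one_right_eq_Icc, ← Finset.Ico_add_one_right_eq_Icc,
        Finset.sum_Ico_eq_sum_range, Finset.sum_Ico_eq_sum_range]
      simp only [Nat.add_sub_cancel]
      rw [Finset.sum_range_succ', Finset.sum_mul, add_comm]
      congr 1
      · simp
      · apply Finset.sum_congr rfl
        intro j hj
        have h1 : n + 1 - (1 + (j+1)) = n - (1 + j) := by omega
        rw [h1, show 1+(j+1) = (1+j)+1 from by omega, pow_succ, mul_assoc]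
    have hS : ∑ k ∈ Finset.Icc 1 n, (Et (n-k) - Pm (Et (n-k))) * L ^ k = -Et n := by
      rw [ih, neg_neg]
    rw [hEtrec n hn, key, hS]
    noncomm_ring
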